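/- Let c(r) denote the r-th smallest positive integer whose Tribonacci representation set contains 3 (these integers form the first column of the Trithoff array). Then the ratio c(r)/r converges to α/(α−1) = (α²+1)/2 as r tends to infinity. -/

import Mathlib

/-- The Tribonacci sequence: T(0)=0, T(1)=0, T(2)=1,
    T(n+3) = T(n+2) + T(n+1) + T(n). -/
def trib : ℕ → ℕ
  | 0 => 0
  | 1 => 0
  | 2 => 1
  | n + 3 => trib (n + 2) + trib (n + 1) + trib n

/-- A Tribonacci representation set: a finite set of naturals, all at least 3,
    containing no three consecutive integers. -/
def IsTribRep (S : Finset ℕ) : Prop :=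
  (∀ i ∈ S, 3 ≤ i) ∧ ∀ i : ℕ, ¬(i ∈ S ∧ i + 1 ∈ S ∧ i + 2 ∈ S)


namespace TP

lemma trib_add3 (n : ℕ) : trib (n+3) = trib (n+2) + trib (n+1) + trib n := rfl

lemma trib_pos : ∀ n, 2 ≤ n → 0 < trib n := by
  intro n h
  induction n using Nat.strong_induction_on with
  | _ n ih =>
    match n, h with
    | 2, _ => decide
    | (m+3), _ =>
      have : 0 < trib (m+2) := ih (m+2) (by omega) (by omega)
      rw [trib_add3]; omega

lemma trib_le_succ : ∀ n, trib n ≤ trib (n+1) := by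
  intro n
  match n with
  | 0 => decide
  | 1 => decide
  | 2 => decide
  | (m+3) =>
    have e : trib (m+4) = trib (m+3) + trib (m+2) + trib (m+1) := trib_add3 (m+1)
    have e2 : trib (m+3+1) = trib (m+4) := rfl
    omega

lemma trib_mono : ∀ {m n}, m ≤ n → trib m ≤ trib n := by
  intro m n h
  induction n with
  | zero => simp_all
  | succ k ih =>
    rcases Nat.lt_or_ge m (k+1) with h'|h'
    · exact le_trans (ih (by omega)) (trib_le_succ k)
    · have : m = k+1 := by omega
      subst this; rfl

lemma trib_lt_succ : ∀ n, 3 ≤ n → trib n < trib (n+1) := by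
  intro n h
  match n, h with
  | (m+3), _ =>
    have e : trib (m+4) = trib (m+3) + trib (m+2) + trib (m+1) := trib_add3 (m+1)
    have e2 : trib (m+3+1) = trib (m+4) := rfl
    have := trib_pos (m+2) (by omega)
    omega

lemma trib_strict_mono : ∀ {m n}, 3 ≤ m → m < n → trib m < trib n := by
  intro m n h3 h
  calc trib m < trib (m+1) := trib_lt_succ m h3
  _ ≤ trib n := trib_mono (by omega)

lemma le_trib : ∀ n, 3 ≤ n → n - 2 ≤ trib n := by
  intro n h
  induction n with
  | zero => omega
  | succ k ih =>
    rcases Nat.lt_or_ge k 3 with h'|h'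
    · have hk2 : k = 2 := by omega
      subst hk2; decide
    · have := ih (by omega)
      have := trib_lt_succ k h'
      omega

lemma isTribRep_subset {S T : Finset ℕ} (h : S ⊆ T) (hT : IsTribRep T) : IsTribRep S :=
  ⟨fun i hi => hT.1 i (h hi), fun i hi => hT.2 i ⟨h hi.1, h hi.2.1, h hi.2.2⟩⟩

lemma sum_le_of_le {k : ℕ} (S : Finset ℕ) (hS : IsTribRep S) (hSk : ∀ i ∈ S, i ≤ k) :
    ∑ i ∈ S, trib i ≤ ∑ i ∈ Finset.Icc 3 k, trib i := by
  exact Finset.sum_le_sum_of_subset (fun i hi => Finset.mem_Icc.mpr ⟨hS.1 i hi, hSk i hi⟩)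

/-- upper bound on sums of rep sets -/
lemma sum_lt : ∀ k, 2 ≤ k → ∀ S : Finset ℕ, IsTribRep S → (∀ i ∈ S, i ≤ k) →
    ∑ i ∈ S, trib i < trib (k+1) := by
  intro k
  induction k using Nat.strong_induction_on with
  | _ k ih =>
    intro hk S hS hSk
    match k, hk with
    | 2, _ =>
      have := sum_le_of_le S hS hSk
      have e : ∑ i ∈ Finset.Icc 3 2, trib i = 0 := by decide
      have e2 : trib (2+1) = 1 := by decide
      omega
    | 3, _ =>
      have := sum_le_of_le S hS hSk
      have e : ∑ i ∈ Finset.Icc 3 3, trib i = 1 := by decide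
      have e2 : trib (3+1) = 2 := by decide
      omega
    | 4, _ =>
      have := sum_le_of_le S hS hSk
      have e : ∑ i ∈ Finset.Icc 3 4, trib i = 3 := by decide
      have e2 : trib (4+1) = 4 := by decide
      omega
    | (m+5), _ =>
      have etop : trib (m+6) = trib (m+5) + trib (m+4) + trib (m+3) := trib_add3 (m+3)
      have etop2 : trib (m+5+1) = trib (m+6) := rfl
      have e45 : trib (m+4+1) = trib (m+5) := rfl
      have e34 : trib (m+3+1) = trib (m+4) := rfl
      have emono : trib (m+4) ≤ trib (m+5) := trib_le_succ (m+4)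
      by_cases h5 : (m+5) ∈ S
      · by_cases h4 : (m+4) ∈ S
        · -- erase both
          have h3 : (m+3) ∉ S := fun h3 => hS.2 (m+3) ⟨h3, h4, h5⟩
          set S' := (S.erase (m+5)).erase (m+4) with hS'
          have hsub : S' ⊆ S := (Finset.erase_subset _ _).trans (Finset.erase_subset _ _)
          have hrep' : IsTribRep S' := isTribRep_subset hsub hS
          have hbound : ∀ i ∈ S', i ≤ m+2 := by
            intro i hi
            have h1 : i ≠ m+4 := Finset.ne_of_mem_erase hi
            have h2 : i ≠ m+5 := Finset.ne_of_mem_erase (Finset.mem_of_mem_erase hi)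
            have h3' : i ≠ m+3 := fun e => h3 (e ▸ hsub hi)
            have := hSk i (hsub hi)
            omega
          have hlt : ∑ i ∈ S', trib i < trib (m+3) := ih (m+2) (by omega) (by omega) S' hrep' hbound
          have e1 : ∑ i ∈ S.erase (m+5), trib i = trib (m+4) + ∑ i ∈ S', trib i := by
            rw [hS', Finset.add_sum_erase _ _ (Finset.mem_erase.mpr ⟨by omega, h4⟩)]
          have e2 : ∑ i ∈ S, trib i = trib (m+5) + ∑ i ∈ S.erase (m+5), trib i := by
            rw [Finset.add_sum_erase _ _ h5]
          omega
        · set S' := S.erase (m+5) with hS'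
          have hsub : S' ⊆ S := Finset.erase_subset _ _
          have hrep' : IsTribRep S' := isTribRep_subset hsub hS
          have hbound : ∀ i ∈ S', i ≤ m+3 := by
            intro i hi
            have h1 : i ≠ m+5 := Finset.ne_of_mem_erase hi
            have h2 : i ≠ m+4 := fun e => h4 (e ▸ hsub hi)
            have := hSk i (hsub hi)
            omega
          have hlt : ∑ i ∈ S', trib i < trib (m+4) := ih (m+3) (by omega) (by omega) S' hrep' hbound
          have e2 : ∑ i ∈ S, trib i = trib (m+5) + ∑ i ∈ S', trib i := by
            rw [hS', Finset.add_sum_erase _ _ h5]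
          omega
      · have hbound : ∀ i ∈ S, i ≤ m+4 := by
          intro i hi
          have : i ≠ m+5 := fun e => h5 (e ▸ hi)
          have := hSk i hi
          omega
        have := ih (m+4) (by omega) (by omega) S hS hbound
        omega

end TP

namespace TP2
open TP

lemma exists_rep : ∀ n, 1 ≤ n → ∃ S : Finset ℕ, IsTribRep S ∧ ∑ i ∈ S, trib i = n ∧ ∀ j ∈ S, trib j ≤ n := by
  intro n
  induction n using Nat.strong_induction_on with
  | _ n ih =>
    intro hn
    -- find largest k with trib k ≤ n
    have h3k : 3 ≤ Nat.findGreatest (fun k => trib k ≤ n) (n+3) :=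
      Nat.le_findGreatest (by omega) (by (show trib 3 ≤ n); (have e : trib 3 = 1 := rfl); omega)
    have hkle : trib (Nat.findGreatest (fun k => trib k ≤ n) (n+3)) ≤ n :=
      Nat.findGreatest_spec (P := fun k => trib k ≤ n) (m := 3) (by omega)
        (by (show trib 3 ≤ n); (have e : trib 3 = 1 := rfl); omega)
    have hklt : Nat.findGreatest (fun k => trib k ≤ n) (n+3) ≤ n + 2 := by
      by_contra h
      have hle := Nat.findGreatest_le (P := fun k => trib k ≤ n) (n+3)
      have hk2 : Nat.findGreatest (fun k => trib k ≤ n) (n+3) = n + 3 := by omega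
      have := le_trib (n+3) (by omega)
      rw [hk2] at hkle
      omega
    have hnlt : n < trib (Nat.findGreatest (fun k => trib k ≤ n) (n+3) + 1) := by
      by_contra h
      have := Nat.findGreatest_is_greatest (P := fun k => trib k ≤ n) (n := n+3)
        (k := Nat.findGreatest (fun k => trib k ≤ n) (n+3) + 1) (by omega) (by omega)
      exact this (by omega)
    obtain ⟨t, hk⟩ : ∃ t, Nat.findGreatest (fun k => trib k ≤ n) (n+3) = t + 3 :=
      ⟨Nat.findGreatest (fun k => trib k ≤ n) (n+3) - 3, by omega⟩
    rw [hk] at hkle hnlt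
    have etop : trib (t+4) = trib (t+3) + trib (t+2) + trib (t+1) := trib_add3 (t+1)
    have etop2 : trib (t+3+1) = trib (t+4) := rfl
    rcases Nat.eq_or_lt_of_le hkle with heq | hlt
    · refine ⟨{t+3}, ⟨?_, ?_⟩, by simpa using heq, ?_⟩
      · intro i hi; simp only [Finset.mem_singleton] at hi; omega
      · intro i hi
        simp only [Finset.mem_singleton] at hi
        omega
      · intro j hj; simp only [Finset.mem_singleton] at hj; subst hj; omega
    · set m := n - trib (t+3) with hm
      have hm1 : 1 ≤ m := by omega
      have hmn : m < n := by
        have := trib_pos (t+3) (by omega)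
        omega
      obtain ⟨S', hrep', hsum', hle'⟩ := ih m hmn hm1
      -- all elements of S' are < t+3
      have hstrict : ∀ j ∈ S', j < t + 3 := by
        intro j hj
        by_contra h
        push_neg at h
        have h1 : trib (t+3) ≤ trib j := trib_mono h
        have h2 : trib j ≤ m := hle' j hj
        have h33 : trib (t+1) + trib (t+2) ≤ trib (t+3) := by
          rcases Nat.eq_zero_or_pos t with rfl | ht
          · decide
          · obtain ⟨s, rfl⟩ : ∃ s, t = s + 1 := ⟨t - 1, by omega⟩
            have : trib (s+4) = trib (s+3) + trib (s+2) + trib (s+1) := trib_add3 (s+1)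
            have e2 : trib (s+1+3) = trib (s+4) := rfl
            have e3 : trib (s+1+2) = trib (s+3) := rfl
            have e4 : trib (s+1+1) = trib (s+2) := rfl
            omega
        omega
      -- not both t+2 and t+1 in S'
      have hnotboth : ¬((t+2) ∈ S' ∧ (t+1) ∈ S') := by
        rintro ⟨h2, h1⟩
        have hsub : ({t+1, t+2} : Finset ℕ) ⊆ S' := by
          intro x hx; simp at hx; rcases hx with rfl | rfl <;> assumption
        have : ∑ i ∈ ({t+1, t+2} : Finset ℕ), trib i ≤ ∑ i ∈ S', trib i :=
          Finset.sum_le_sum_of_subset hsub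
        rw [Finset.sum_pair (by omega)] at this
        omega
      refine ⟨insert (t+3) S', ⟨?_, ?_⟩, ?_, ?_⟩
      · intro i hi
        rcases Finset.mem_insert.mp hi with rfl | hi'
        · omega
        · exact hrep'.1 i hi'
      · rintro i ⟨hi, hi1, hi2⟩
        rcases Finset.mem_insert.mp hi2 with he | hi2'
        · -- i+2 = t+3, so i = t+1, i+1 = t+2 both in S'
          have h1 : i = t+1 := by omega
          have hiS : i ∈ S' := by
            rcases Finset.mem_insert.mp hi with he' | h
            · omega
            · exact h
          have hi1S : i+1 ∈ S' := by
            rcases Finset.mem_insert.mp hi1 with he' | h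
            · omega
            · exact h
          exact hnotboth ⟨by rw [← (by omega : i + 1 = t+2)]; exact hi1S, by rw [← h1]; exact hiS⟩
        · have := hstrict _ hi2'
          -- i+2 < t+3, so i, i+1 < t+3, all in S'
          have hiS : i ∈ S' := by
            rcases Finset.mem_insert.mp hi with he' | h
            · omega
            · exact h
          have hi1S : i+1 ∈ S' := by
            rcases Finset.mem_insert.mp hi1 with he' | h
            · omega
            · exact h
          exact hrep'.2 i ⟨hiS, hi1S, hi2'⟩
      · have hnot : (t+3) ∉ S' := fun h => by have := hstrict _ h; omega
        rw [Finset.sum_insert hnot, hsum']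
        omega
      · intro j hj
        rcases Finset.mem_insert.mp hj with rfl | hj'
        · omega
        · exact le_trans (hle' j hj') (by omega)

lemma rep_unique : ∀ n, ∀ S T : Finset ℕ, IsTribRep S → IsTribRep T →
    ∑ i ∈ S, trib i = n → ∑ i ∈ T, trib i = n → S = T := by
  intro n
  induction n using Nat.strong_induction_on with
  | _ n ih =>
    intro S T hS hT hSn hTn
    rcases Nat.eq_zero_or_pos n with rfl | hn
    · -- both empty
      have hSe : S = ∅ := by
        by_contra h
        obtain ⟨x, hx⟩ := Finset.nonempty_of_ne_empty h
        have h1 : 0 < trib x := trib_pos x (by have := hS.1 x hx; omega)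
        have : trib x ≤ ∑ i ∈ S, trib i := Finset.single_le_sum (fun i _ => Nat.zero_le _) hx
        omega
      have hTe : T = ∅ := by
        by_contra h
        obtain ⟨x, hx⟩ := Finset.nonempty_of_ne_empty h
        have h1 : 0 < trib x := trib_pos x (by have := hT.1 x hx; omega)
        have : trib x ≤ ∑ i ∈ T, trib i := Finset.single_le_sum (fun i _ => Nat.zero_le _) hx
        omega
      rw [hSe, hTe]
    · have hSne : S.Nonempty := by
        by_contra h
        rw [Finset.not_nonempty_iff_eq_empty] at h
        subst h; simp at hSn; omega
      have hTne : T.Nonempty := by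
        by_contra h
        rw [Finset.not_nonempty_iff_eq_empty] at h
        subst h; simp at hTn; omega
      obtain ⟨a, hamem, hamax⟩ : ∃ a, a ∈ S ∧ ∀ i ∈ S, i ≤ a :=
        ⟨S.max' hSne, S.max'_mem hSne, fun i hi => S.le_max' i hi⟩
      obtain ⟨b, hbmem, hbmax⟩ : ∃ b, b ∈ T ∧ ∀ i ∈ T, i ≤ b :=
        ⟨T.max' hTne, T.max'_mem hTne, fun i hi => T.le_max' i hi⟩
      have ha3 : 3 ≤ a := hS.1 a hamem
      have hb3 : 3 ≤ b := hT.1 b hbmem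
      have haub : n < trib (a+1) := by
        rw [← hSn]
        exact sum_lt a (by omega) S hS hamax
      have hbub : n < trib (b+1) := by
        rw [← hTn]
        exact sum_lt b (by omega) T hT hbmax
      have halb : trib a ≤ n := by
        rw [← hSn]
        exact Finset.single_le_sum (fun i _ => Nat.zero_le _) hamem
      have hblb : trib b ≤ n := by
        rw [← hTn]
        exact Finset.single_le_sum (fun i _ => Nat.zero_le _) hbmem
      have hab : a = b := by
        by_contra h
        rcases Nat.lt_or_ge a b with hl | hg
        · have : trib (a+1) ≤ trib b := trib_mono (by omega)
          omega
        · have hgl : b < a := by omega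
          have : trib (b+1) ≤ trib a := trib_mono (by omega)
          omega
      subst hab
      have hSmem := hamem
      have hTmem : a ∈ T := hbmem
      have hS' : IsTribRep (S.erase a) := isTribRep_subset (Finset.erase_subset _ _) hS
      have hT' : IsTribRep (T.erase a) := isTribRep_subset (Finset.erase_subset _ _) hT
      have hSsum : trib a + ∑ i ∈ S.erase a, trib i = n := by
        rw [Finset.add_sum_erase _ _ hSmem]; exact hSn
      have hTsum : trib a + ∑ i ∈ T.erase a, trib i = n := by
        rw [Finset.add_sum_erase _ _ hTmem]; exact hTn
      have hpos : 0 < trib a := trib_pos a (by omega)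
      have := ih (n - trib a) (by omega) (S.erase a) (T.erase a) hS' hT' (by omega) (by omega)
      have eS : S = insert a (S.erase a) := (Finset.insert_erase hSmem).symm
      have eT : T = insert a (T.erase a) := (Finset.insert_erase hTmem).symm
      rw [eS, eT, this]

end TP2

namespace TP3
open TP TP2 Finset

noncomputable def rep (n : ℕ) : Finset ℕ :=
  if h : 1 ≤ n then (exists_rep n h).choose else ∅

lemma rep_spec {n : ℕ} (h : 1 ≤ n) : IsTribRep (rep n) ∧ ∑ i ∈ rep n, trib i = n := by
  rw [rep, dif_pos h]
  obtain ⟨h1, h2, _⟩ := (exists_rep n h).choose_spec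
  exact ⟨h1, h2⟩

lemma rep_eq {n : ℕ} (h : 1 ≤ n) {S : Finset ℕ} (hS : IsTribRep S)
    (hsum : ∑ i ∈ S, trib i = n) : rep n = S :=
  rep_unique n _ _ (rep_spec h).1 hS (rep_spec h).2 hsum

noncomputable def sig (n : ℕ) : ℕ := ∑ i ∈ rep n, trib (i+1)

lemma le_sig {n : ℕ} (h : 1 ≤ n) : n ≤ sig n := by
  conv_lhs => rw [← (rep_spec h).2]
  exact Finset.sum_le_sum (fun i _ => trib_le_succ i)

/-- shifting a rep set up -/
lemma shift_up {S : Finset ℕ} (hS : IsTribRep S) :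
    IsTribRep (S.image (· + 1)) ∧ 3 ∉ S.image (· + 1) ∧
      ∑ i ∈ S.image (· + 1), trib i = ∑ i ∈ S, trib (i+1) := by
  refine ⟨⟨?_, ?_⟩, ?_, Finset.sum_image (fun a _ b _ h => Nat.add_right_cancel h)⟩
  · intro i hi
    obtain ⟨j, hj, rfl⟩ := Finset.mem_image.mp hi
    have := hS.1 j hj; omega
  · rintro i ⟨h0, h1, h2⟩
    obtain ⟨j0, hj0, he0⟩ := Finset.mem_image.mp h0
    obtain ⟨j1, hj1, he1⟩ := Finset.mem_image.mp h1
    obtain ⟨j2, hj2, he2⟩ := Finset.mem_image.mp h2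
    exact hS.2 j0 ⟨hj0, by rwa [(by omega : j0 + 1 = j1)], by rwa [(by omega : j0 + 2 = j2)]⟩
  · intro h
    obtain ⟨j, hj, he⟩ := Finset.mem_image.mp h
    have := hS.1 j hj; omega

/-- shifting down a rep set avoiding 3 -/
lemma shift_down {S : Finset ℕ} (hS : IsTribRep S) (h3 : 3 ∉ S) :
    IsTribRep (S.image (· - 1)) ∧
      ∑ i ∈ S.image (· - 1), trib (i+1) = ∑ i ∈ S, trib i := by
  have h4 : ∀ j ∈ S, 4 ≤ j := by
    intro j hj
    have := hS.1 j hj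
    rcases Nat.eq_or_lt_of_le this with he | h
    · exact absurd (he ▸ hj) h3
    · omega
  have hinj : ∀ a ∈ S, ∀ b ∈ S, a - 1 = b - 1 → a = b := by
    intro a ha b hb h
    have := h4 a ha; have := h4 b hb; omega
  constructor
  · constructor
    · intro i hi
      obtain ⟨j, hj, rfl⟩ := Finset.mem_image.mp hi
      have := h4 j hj; omega
    · rintro i ⟨h0, h1, h2⟩
      obtain ⟨j0, hj0, he0⟩ := Finset.mem_image.mp h0
      obtain ⟨j1, hj1, he1⟩ := Finset.mem_image.mp h1
      obtain ⟨j2, hj2, he2⟩ := Finset.mem_image.mp h2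
      have := h4 j0 hj0; have := h4 j1 hj1; have := h4 j2 hj2
      refine hS.2 (j0) ⟨hj0, ?_, ?_⟩
      · rwa [(by omega : j0 + 1 = j1)]
      · rwa [(by omega : j0 + 2 = j2)]
  · rw [Finset.sum_image hinj]
    apply Finset.sum_congr rfl
    intro j hj
    have := h4 j hj
    congr 1
    omega

open Classical in
noncomputable def cntA (N : ℕ) : ℕ :=
  ((Finset.Icc 1 N).filter (fun n => ∃ S : Finset ℕ, IsTribRep S ∧ 3 ∈ S ∧ n = ∑ i ∈ S, trib i)).card

open Classical in
noncomputable def cntB (N : ℕ) : ℕ :=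
  ((Finset.Icc 1 N).filter (fun n => ∃ S : Finset ℕ, IsTribRep S ∧ 3 ∉ S ∧ n = ∑ i ∈ S, trib i)).card

open Classical in
lemma cnt_partition (N : ℕ) : cntA N + cntB N = N := by
  rw [cntA, cntB]
  have h := Finset.card_filter_add_card_filter_not
    (s := Finset.Icc 1 N)
    (p := fun n => ∃ S : Finset ℕ, IsTribRep S ∧ 3 ∈ S ∧ n = ∑ i ∈ S, trib i)
  have e : (Finset.Icc 1 N).filter
      (fun n => ¬ ∃ S : Finset ℕ, IsTribRep S ∧ 3 ∈ S ∧ n = ∑ i ∈ S, trib i) =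
      (Finset.Icc 1 N).filter (fun n => ∃ S : Finset ℕ, IsTribRep S ∧ 3 ∉ S ∧ n = ∑ i ∈ S, trib i) := by
    apply Finset.filter_congr
    intro n hn
    simp only [Finset.mem_Icc] at hn
    have h1 : 1 ≤ n := hn.1
    obtain ⟨hrep, hsum⟩ := rep_spec h1
    constructor
    · intro hne
      refine ⟨rep n, hrep, ?_, hsum.symm⟩
      intro h3
      exact hne ⟨rep n, hrep, h3, hsum.symm⟩
    · rintro ⟨S, hS, h3S, hSsum⟩ ⟨S', hS', h3S', hSsum'⟩
      have := rep_unique n S S' hS hS' hSsum.symm hSsum'.symm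
      subst this
      exact h3S h3S'
  rw [e] at h
  simpa using h

open Classical in
lemma cntB_eq_sig (N : ℕ) :
    cntB N = ((Finset.Icc 1 N).filter (fun m => sig m ≤ N)).card := by
  rw [cntB]
  refine (Finset.card_bij (fun m _ => sig m) ?_ ?_ ?_).symm
  · -- maps into
    intro m hm
    simp only [Finset.mem_filter, Finset.mem_Icc] at hm ⊢
    obtain ⟨⟨hm1, hmN⟩, hsig⟩ := hm
    obtain ⟨hrep, hsum⟩ := rep_spec hm1
    obtain ⟨hrep', h3', hsum'⟩ := shift_up hrep
    refine ⟨⟨le_trans hm1 (le_sig hm1), hsig⟩, (rep m).image (· + 1), hrep', h3', ?_⟩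
    rw [hsum']
    rfl
  · -- injective
    intro m hm m' hm' he
    simp only [Finset.mem_filter, Finset.mem_Icc] at hm hm'
    obtain ⟨hrep, hsum⟩ := rep_spec hm.1.1
    obtain ⟨hrep', hsum'⟩ := rep_spec hm'.1.1
    obtain ⟨hr1, h31, hs1⟩ := shift_up hrep
    obtain ⟨hr2, h32, hs2⟩ := shift_up hrep'
    have h1 : ∑ i ∈ (rep m).image (· + 1), trib i = sig m := by rw [hs1]; rfl
    have h2 : ∑ i ∈ (rep m').image (· + 1), trib i = sig m' := by rw [hs2]; rfl
    have he' : sig m = sig m' := he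
    have := rep_unique (sig m) _ _ hr1 hr2 h1 (h2.trans he'.symm)
    have himg : rep m = rep m' := by
      have hinj : Function.Injective (· + 1 : ℕ → ℕ) := fun a b h => Nat.add_right_cancel h
      exact Finset.image_injective hinj this
    rw [← hsum, ← hsum', himg]
  · -- surjective
    intro n hn
    simp only [Finset.mem_filter, Finset.mem_Icc] at hn
    obtain ⟨⟨hn1, hnN⟩, S, hS, h3S, hSsum⟩ := hn
    obtain ⟨hrepd, hsumd⟩ := shift_down hS h3S
    set m := ∑ i ∈ S.image (· - 1), trib i with hm
    have hm1 : 1 ≤ m := by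
      have hSne : S.Nonempty := by
        by_contra h
        rw [Finset.not_nonempty_iff_eq_empty] at h
        subst h; simp at hSsum; omega
      obtain ⟨x, hx⟩ := hSne
      have hx' : x - 1 ∈ S.image (· - 1) := Finset.mem_image_of_mem _ hx
      have hp : 0 < trib (x-1) := by
        apply trib_pos
        have := hrepd.1 _ hx'
        omega
      have : trib (x-1) ≤ m := Finset.single_le_sum (fun i _ => Nat.zero_le _) hx'
      omega
    have hrepm : rep m = S.image (· - 1) := rep_eq hm1 hrepd rfl
    have hsigm : sig m = n := by
      rw [sig, hrepm, hsumd, ← hSsum]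
    refine ⟨m, ?_, hsigm⟩
    simp only [Finset.mem_filter, Finset.mem_Icc]
    have hmsig : m ≤ sig m := le_sig hm1
    exact ⟨⟨hm1, by omega⟩, by omega⟩

end TP3

namespace TP4

noncomputable def u (α : ℝ) (i : ℕ) : ℝ := (trib (i+1) : ℝ) - α * trib i

noncomputable def V (α : ℝ) (i : ℕ) : ℝ :=
  α * (u α (i+1))^2 + α*(α-1) * (u α (i+1)) * (u α i) + (u α i)^2

variable {α : ℝ} (hα : α ^ 3 = α ^ 2 + α + 1) (h1 : 1.83 ≤ α) (h2 : α ≤ 1.84)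

include hα h1 h2

lemma u_rec (i : ℕ) : α * u α (i+2) = α*(1-α) * u α (i+1) - u α i := by
  have e : (trib (i+3) : ℝ) = (trib (i+2):ℝ) + (trib (i+1):ℝ) + (trib i:ℝ) := by
    have eN : trib (i+3) = trib (i+2) + trib (i+1) + trib i := rfl
    rw [eN, Nat.cast_add, Nat.cast_add]
  simp only [u]
  rw [show i + 2 + 1 = i + 3 from rfl, e]
  linear_combination (-(trib (i+1):ℝ)) * hα

lemma V_rec (i : ℕ) : α * V α (i+1) = V α i := by
  have hr := u_rec hα h1 h2 i
  have hα0 : α ≠ 0 := by nlinarith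
  have hx : u α (i+2) = (α*(1-α) * u α (i+1) - u α i) / α := by
    field_simp
    linarith
  simp only [V]
  rw [show i + 1 + 1 = i + 2 from rfl, hx]
  field_simp
  ring

lemma V_pow (i : ℕ) : α ^ i * V α i = α := by
  induction i with
  | zero =>
    have e0 : u α 0 = 0 := by simp [u, trib]
    have e1 : u α 1 = 1 := by
      simp only [u]
      norm_num [show trib 2 = 1 from rfl, show trib 1 = 0 from rfl]
    simp [V, e0, e1]
  | succ k ih =>
    have := V_rec hα h1 h2 k
    calc α ^ (k+1) * V α (k+1) = α ^ k * (α * V α (k+1)) := by ring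
    _ = α ^ k * V α k := by rw [this]
    _ = α := ih

lemma sq_u_le (i : ℕ) : (u α i)^2 ≤ 4 * ((0.5476:ℝ))^i := by
  have hpow : (0:ℝ) < α ^ i := pow_pos (by linarith) i
  have hV : V α i = α / α ^ i := by
    have := V_pow hα h1 h2 i
    field_simp
    linarith [this]
  have hsq : (u α i)^2 ≤ 2 * V α i := by
    simp only [V]
    have hq : α * (α-1)^2 ≤ 2 := by nlinarith
    have t1 : 0 ≤ α * (2 * u α (i+1) + (α-1) * u α i)^2 :=
      mul_nonneg (by linarith) (sq_nonneg _)
    have t2 : 0 ≤ (2 - α * (α-1)^2) * (u α i)^2 :=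
      mul_nonneg (by linarith) (sq_nonneg _)
    nlinarith [t1, t2]
  have hmono : (1/α)^i ≤ (0.5476:ℝ)^i := by
    apply pow_le_pow_left₀ (by positivity)
    rw [div_le_iff₀ (by linarith)]
    nlinarith
  have : α / α ^ i ≤ 2 * (0.5476:ℝ)^i := by
    rw [div_le_iff₀ hpow]
    have e : (1/α)^i * α ^ i = 1 := by
      rw [div_pow]
      field_simp
      exact one_pow i
    nlinarith [mul_le_mul_of_nonneg_right hmono (le_of_lt hpow)]
  calc (u α i)^2 ≤ 2 * V α i := hsq
  _ = 2 * (α / α ^ i) := by rw [hV]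
  _ ≤ 2 * (2 * (0.5476:ℝ)^i) := by linarith
  _ = 4 * (0.5476:ℝ)^i := by ring

lemma abs_u_le (i : ℕ) : |u α i| ≤ 2 * ((0.74:ℝ))^i := by
  have h := sq_u_le hα h1 h2 i
  have hB : (0:ℝ) < (0.74:ℝ)^i := by positivity
  have he : ((0.74:ℝ)^i)^2 = (0.5476:ℝ)^i := by
    rw [← pow_mul, mul_comm, pow_mul]
    norm_num
  rw [abs_le]
  constructor
  · nlinarith [sq_nonneg (u α i + 2 * (0.74:ℝ)^i)]
  · nlinarith [sq_nonneg (u α i - 2 * (0.74:ℝ)^i)]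

lemma sum_abs_u_le (S : Finset ℕ) : ∑ i ∈ S, |u α i| ≤ 8 := by
  have hsub : S ⊆ Finset.range (S.sup id + 1) := by
    intro i hi
    simp only [Finset.mem_range]
    exact Nat.lt_succ_of_le (Finset.le_sup (f := id) hi)
  calc ∑ i ∈ S, |u α i| ≤ ∑ i ∈ S, 2 * (0.74:ℝ)^i :=
        Finset.sum_le_sum (fun i _ => abs_u_le hα h1 h2 i)
  _ ≤ ∑ i ∈ Finset.range (S.sup id + 1), 2 * (0.74:ℝ)^i := by
        apply Finset.sum_le_sum_of_subset_of_nonneg hsub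
        intro i _ _
        positivity
  _ = 2 * ∑ i ∈ Finset.range (S.sup id + 1), (0.74:ℝ)^i := by
        rw [Finset.mul_sum]
  _ ≤ 8 := by
        have hgeq := geom_sum_eq (show (0.74:ℝ) ≠ 1 by norm_num) (S.sup id + 1)
        rw [hgeq]
        have hp : (0:ℝ) < (0.74:ℝ)^(S.sup id + 1) := by positivity
        have e : 2 * (((0.74:ℝ)^(S.sup id + 1) - 1)/((0.74:ℝ) - 1))
            = (1 - (0.74:ℝ)^(S.sup id + 1))/(0.13:ℝ) := by ring
        rw [e, div_le_iff₀ (by norm_num : (0:ℝ) < 0.13)]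
        nlinarith [hp]

end TP4


namespace TP5
open TP TP2 TP3 TP4 Finset

variable {α : ℝ} (hα : α ^ 3 = α ^ 2 + α + 1) (h1 : 1.83 ≤ α) (h2 : α ≤ 1.84)

include hα h1 h2

lemma sig_bound {m : ℕ} (hm : 1 ≤ m) : |(sig m : ℝ) - α * m| ≤ 8 := by
  obtain ⟨hrep, hsum⟩ := rep_spec hm
  have e1 : (sig m : ℝ) = ∑ i ∈ rep m, (trib (i+1) : ℝ) := by
    rw [sig]; push_cast; rfl
  have e2 : (m : ℝ) = ∑ i ∈ rep m, (trib i : ℝ) := by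
    exact_mod_cast hsum.symm
  have e3 : (sig m : ℝ) - α * m = ∑ i ∈ rep m, u α i := by
    rw [e1, e2, Finset.mul_sum, ← Finset.sum_sub_distrib]
    rfl
  rw [e3]
  calc |∑ i ∈ rep m, u α i| ≤ ∑ i ∈ rep m, |u α i| := Finset.abs_sum_le_sum_abs _ _
  _ ≤ 8 := sum_abs_u_le hα h1 h2 _

lemma cntB_upper (N : ℕ) : (cntB N : ℝ) ≤ ((N:ℝ) + 8)/α := by
  classical
  have hα0 : (0:ℝ) < α := by linarith
  rw [cntB_eq_sig]
  have hsub : (Finset.Icc 1 N).filter (fun m => sig m ≤ N) ⊆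
      Finset.Icc 1 (Nat.floor (((N:ℝ) + 8)/α)) := by
    intro m hm
    simp only [Finset.mem_filter, Finset.mem_Icc] at hm ⊢
    obtain ⟨⟨hm1, _⟩, hsig⟩ := hm
    refine ⟨hm1, Nat.le_floor ?_⟩
    have hb := sig_bound hα h1 h2 hm1
    have : α * m - 8 ≤ (sig m : ℝ) := by
      have := abs_le.mp hb
      linarith [this.1]
    have hsigN : (sig m : ℝ) ≤ N := by exact_mod_cast hsig
    rw [le_div_iff₀ hα0]
    linarith
  calc ((((Finset.Icc 1 N).filter (fun m => sig m ≤ N)).card : ℕ) : ℝ)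
      ≤ ((Finset.Icc 1 (Nat.floor (((N:ℝ) + 8)/α))).card : ℝ) := by
        exact_mod_cast Finset.card_le_card hsub
  _ = (Nat.floor (((N:ℝ) + 8)/α) : ℝ) := by rw [Nat.card_Icc]; simp
  _ ≤ ((N:ℝ) + 8)/α := Nat.floor_le (by positivity)

lemma cntB_lower (N : ℕ) : ((N:ℝ) - 8)/α - 1 ≤ (cntB N : ℝ) := by
  classical
  have hα0 : (0:ℝ) < α := by linarith
  rcases lt_or_ge (N:ℝ) 8 with hN | hN
  · have : ((N:ℝ) - 8)/α < 0 := div_neg_of_neg_of_pos (by linarith) hα0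
    have : ((N:ℝ) - 8)/α - 1 < 0 := by linarith
    exact le_trans (le_of_lt this) (by positivity)
  · rw [cntB_eq_sig]
    set x := ((N:ℝ) - 8)/α with hx
    have hx0 : 0 ≤ x := div_nonneg (by linarith) (le_of_lt hα0)
    have hsub : Finset.Icc 1 (Nat.floor x) ⊆
        (Finset.Icc 1 N).filter (fun m => sig m ≤ N) := by
      intro m hm
      simp only [Finset.mem_Icc] at hm
      obtain ⟨hm1, hmf⟩ := hm
      have hmx : (m:ℝ) ≤ x := le_trans (Nat.cast_le.mpr hmf) (Nat.floor_le hx0)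
      have hαm : α * m ≤ (N:ℝ) - 8 := by
        rw [hx, le_div_iff₀ hα0] at hmx
        linarith [hmx]
      have hb := sig_bound hα h1 h2 hm1
      have hup : (sig m : ℝ) ≤ α * m + 8 := by
        have := abs_le.mp hb
        linarith [this.2]
      have hsigN : (sig m : ℝ) ≤ (N:ℝ) := by linarith
      have hsigN' : sig m ≤ N := by exact_mod_cast hsigN
      have hmN : m ≤ N := le_trans (le_sig hm1) hsigN'
      simp only [Finset.mem_filter, Finset.mem_Icc]
      exact ⟨⟨hm1, hmN⟩, hsigN'⟩
    have hcard : Nat.floor x ≤ ((Finset.Icc 1 N).filter (fun m => sig m ≤ N)).card := by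
      have := Finset.card_le_card hsub
      rwa [Nat.card_Icc, Nat.add_sub_cancel] at this
    have : x < (Nat.floor x : ℝ) + 1 := Nat.lt_floor_add_one x
    have : (Nat.floor x : ℝ) ≤ (((Finset.Icc 1 N).filter (fun m => sig m ≤ N)).card : ℝ) := by
      exact_mod_cast hcard
    linarith [Nat.lt_floor_add_one x]

lemma cntA_bound (N : ℕ) : |(cntA N : ℝ) - (1 - 1/α) * N| ≤ 9 := by
  have hα0 : (0:ℝ) < α := by linarith
  have hpart := cnt_partition N
  have hcast : (cntA N : ℝ) = (N:ℝ) - (cntB N : ℝ) := by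
    have : (cntA N : ℝ) + (cntB N : ℝ) = (N:ℝ) := by exact_mod_cast hpart
    linarith
  have hup := cntB_upper hα h1 h2 N
  have hlo := cntB_lower hα h1 h2 N
  rw [hcast, abs_le]
  have h8 : 8/α ≤ 8 := by
    rw [div_le_iff₀ hα0]; nlinarith
  have e1 : ((N:ℝ) + 8)/α = (1/α)*(N:ℝ) + 8/α := by ring
  have e2 : ((N:ℝ) - 8)/α = (1/α)*(N:ℝ) - 8/α := by ring
  have h80 : 0 ≤ 8/α := by positivity
  constructor
  · linarith [hup, e1, h8]
  · linarith [hlo, e2, h80]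

end TP5

/-- If `c` enumerates (in increasing order, starting at index 0) the positive
    integers whose Tribonacci representation set contains 3 (the first column of
    the Trithoff array), then `c r / r` (1-indexed) converges to `α/(α−1)`. -/
theorem first_column_growth_rate (α : ℝ) (hα : α ^ 3 = α ^ 2 + α + 1)
    (c : ℕ → ℕ) (hmono : StrictMono c)
    (hrange : ∀ n : ℕ, (∃ r : ℕ, c r = n) ↔
      (0 < n ∧ ∃ S : Finset ℕ, IsTribRep S ∧ 3 ∈ S ∧ n = ∑ i ∈ S, trib i)) :
    Filter.Tendsto (fun r : ℕ => (c r : ℝ) / (r + 1)) Filter.atTop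
      (nhds (α / (α - 1))) := by
  classical
  have h1 : (1.83:ℝ) ≤ α := by
    nlinarith [sq_nonneg α, sq_nonneg (α-1.83), sq_nonneg (α+1), sq_nonneg (α+0.5),
      sq_nonneg (α-1), sq_nonneg (α+2)]
  have h2 : α ≤ 1.84 := by
    nlinarith [sq_nonneg α, sq_nonneg (α-1.84), sq_nonneg (α+1), sq_nonneg (α+0.5),
      sq_nonneg (α-1), sq_nonneg (α+2)]
  have hαpos : (0:ℝ) < α := by linarith
  have hcnt : ∀ r : ℕ, TP3.cntA (c r) = r + 1 := by
    intro r
    have hset : (Finset.Icc 1 (c r)).filter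
        (fun n => ∃ S : Finset ℕ, IsTribRep S ∧ 3 ∈ S ∧ n = ∑ i ∈ S, trib i)
        = (Finset.range (r+1)).image c := by
      ext n
      simp only [Finset.mem_filter, Finset.mem_Icc, Finset.mem_image, Finset.mem_range]
      constructor
      · rintro ⟨⟨hn1, hnc⟩, hP⟩
        obtain ⟨j, hj⟩ := (hrange n).mpr ⟨by omega, hP⟩
        refine ⟨j, ?_, hj⟩
        rw [← hj] at hnc
        exact Nat.lt_succ_of_le (hmono.le_iff_le.mp hnc)
      · rintro ⟨j, hjr, rfl⟩
        obtain ⟨hpos, hP⟩ := (hrange (c j)).mp ⟨j, rfl⟩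
        exact ⟨⟨hpos, hmono.monotone (by omega)⟩, hP⟩
    rw [TP3.cntA, hset, Finset.card_image_of_injective _ hmono.injective, Finset.card_range]
  set d : ℝ := 1 - 1/α with hd
  have hd0 : 0 < d := by
    rw [hd]
    have : 1/α < 1 := by rw [div_lt_one hαpos]; linarith
    linarith
  have hL : α/(α-1) = 1/d := by
    rw [hd]
    field_simp
  have key : ∀ r : ℕ, |(c r:ℝ)/((r:ℝ)+1) - α/(α-1)| ≤ (9/d) * (1/((r:ℝ)+1)) := by
    intro r
    have hb := TP5.cntA_bound hα h1 h2 (c r)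
    rw [hcnt r, ← hd] at hb
    push_cast at hb
    have hr1 : (0:ℝ) < (r:ℝ)+1 := by positivity
    rw [hL]
    have e : (c r:ℝ)/((r:ℝ)+1) - 1/d = -((((r:ℝ)+1) - d * (c r)))/(d*((r:ℝ)+1)) := by
      field_simp
      ring
    rw [e, abs_div, abs_neg, abs_of_pos (by positivity : (0:ℝ) < d*((r:ℝ)+1))]
    have hnum : |(((r:ℝ)+1) - d * (c r))| ≤ 9 := by
      rw [abs_le] at hb ⊢
      constructor <;> [linarith [hb.2]; linarith [hb.1]]
    calc |(((r:ℝ)+1) - d * (c r))| / (d*((r:ℝ)+1)) ≤ 9 / (d*((r:ℝ)+1)) := by gcongr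
    _ = (9/d) * (1/((r:ℝ)+1)) := by
          rw [div_mul_eq_div_div, div_eq_mul_one_div]
  have htend0 : Filter.Tendsto (fun r : ℕ => (9/d)*(1/((r:ℝ)+1))) Filter.atTop (nhds 0) := by
    have := tendsto_one_div_add_atTop_nhds_zero_nat.const_mul (9/d)
    simpa using this
  have hsq : Filter.Tendsto (fun r : ℕ => (c r:ℝ)/((r:ℝ)+1) - α/(α-1)) Filter.atTop (nhds 0) := by
    apply squeeze_zero_norm _ htend0
    intro r
    rw [Real.norm_eq_abs]
    exact key r
  have := hsq.add_const (α/(α-1))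
  simpa using this
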